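/- arXiv:1411.5905 — 2 statements merged into one kernel-verified Lean document; each statement's English description precedes it below -/
import Mathlib

section
/- Let X be a set with two binary operations ⊳₁ and ⊳₂ that are mutually right-distributive: (x⊳_i y)⊳_j z = (x⊳_j z)⊳_i(y⊳_j z) for all x,y,z and i,j ∈ {1,2} (in particular each is a shelf operation). Then the induced one-term differentials on the free R-module chain groups anticommute: ∂^{⊳₁}∂^{⊳₂} + ∂^{⊳₂}∂^{⊳₁} = 0. Consequently, for any a,b ∈ R the linear combination a·∂^{⊳₁} + b·∂^{⊳₂} squares to zero. -/
def face {X : Type*} (op : X → X → X) {n : ℕ} (i : Fin (n+1)) (f : Fin (n+1) → X) :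
    Fin n → X :=
  fun k => if (k : ℕ) < (i : ℕ) then f k.castSucc else op (f k.succ) (f i)

noncomputable def oneTermDiff {X : Type*} (R : Type*) [CommRing R] (op : X → X → X) (n : ℕ) :
    ((Fin (n+1) → X) →₀ R) →ₗ[R] ((Fin n → X) →₀ R) :=
  ∑ i : Fin (n+1), ((-1 : R) ^ (n - (i : ℕ))) • Finsupp.lmapDomain R R (face op i)

lemma face_face {X : Type*} (A B : X → X → X)
    (hd : ∀ x y z, A (B x y) z = B (A x z) (A y z))
    {n : ℕ} (i : Fin (n+1)) (j : Fin (n+2)) (hij : (i:ℕ) < (j:ℕ)) :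
    (face A i) ∘ (face B j)
      = (face B ⟨(j:ℕ)-1, by omega⟩) ∘ (face A ⟨(i:ℕ), by omega⟩) := by
  funext f k
  have hi := i.isLt
  have hj := j.isLt
  have fc : ∀ (a b : Fin (n+2)), (a:ℕ) = (b:ℕ) → f a = f b :=
    fun a b h => congrArg f (Fin.ext h)
  simp only [Function.comp, face, Fin.coe_castSucc, Fin.val_succ]
  split_ifs <;>
    first
      | rfl
      | omega
      | (exact fc _ _ (by simp +arith))
      | (congr 1 <;> exact fc _ _ (by simp +arith; omega))
      | (rw [hd]; congr 1 <;>
          first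
            | (exact fc _ _ (by simp +arith; omega))
            | (congr 1 <;> exact fc _ _ (by simp +arith; omega)))

lemma face_face' {X : Type*} (A B : X → X → X)
    (hd : ∀ x y z, A (B x y) z = B (A x z) (A y z))
    {n : ℕ} (i : Fin (n+1)) (j : Fin (n+2)) (j' : Fin (n+1)) (i' : Fin (n+2))
    (hij : (i:ℕ) < (j:ℕ)) (hj' : (j':ℕ) = (j:ℕ) - 1) (hi' : (i':ℕ) = (i:ℕ)) :
    (face A i) ∘ (face B j) = (face B j') ∘ (face A i') := by
  have e1 : j' = ⟨(j:ℕ)-1, by have := j.isLt; omega⟩ := Fin.ext hj'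
  have e2 : i' = ⟨(i:ℕ), by have := i.isLt; omega⟩ := Fin.ext hi'
  rw [e1, e2]
  exact face_face A B hd i j hij

lemma mySum_comp {R M N P : Type*} [CommRing R] [AddCommGroup M] [AddCommGroup N]
    [AddCommGroup P] [Module R M] [Module R N] [Module R P]
    {ι : Type*} (s : Finset ι) (f : ι → (N →ₗ[R] P)) (g : M →ₗ[R] N) :
    (∑ i ∈ s, f i).comp g = ∑ i ∈ s, (f i).comp g := by
  ext x; simp [LinearMap.sum_apply]

lemma myComp_sum {R M N P : Type*} [CommRing R] [AddCommGroup M] [AddCommGroup N]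
    [AddCommGroup P] [Module R M] [Module R N] [Module R P]
    {ι : Type*} (s : Finset ι) (f : N →ₗ[R] P) (g : ι → (M →ₗ[R] N)) :
    f.comp (∑ i ∈ s, g i) = ∑ i ∈ s, f.comp (g i) := by
  ext x; simp [LinearMap.sum_apply]

lemma oneTermDiff_comp {X : Type*} (R : Type*) [CommRing R] (o o' : X → X → X) (n : ℕ) :
    (oneTermDiff R o n).comp (oneTermDiff R o' (n+1))
      = ∑ p : Fin (n+1) × Fin (n+2),
          ((-1 : R) ^ ((n - (p.1 : ℕ)) + (n + 1 - (p.2 : ℕ)))) •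
            Finsupp.lmapDomain R R ((face o p.1) ∘ (face o' p.2)) := by
  rw [Fintype.sum_prod_type]
  simp only [oneTermDiff, mySum_comp, myComp_sum, LinearMap.smul_comp, LinearMap.comp_smul,
    ← Finsupp.lmapDomain_comp, Finset.smul_sum, smul_smul, pow_add]
  rw [Finset.sum_comm]
  exact Finset.sum_congr rfl fun i _ => Finset.sum_congr rfl fun j _ => by rw [mul_comm]

lemma neg_one_pow_add_eq_zero' {R : Type*} [CommRing R] {m k : ℕ} (h : Odd (m + k)) :
    ((-1 : R) ^ m + (-1) ^ k) = 0 := by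
  rcases Nat.even_or_odd m with hm | hm
  · have hk : Odd k := by rcases h with ⟨c, hc⟩; rcases hm with ⟨d, hd⟩; exact ⟨c - d, by omega⟩
    rw [hm.neg_one_pow, hk.neg_one_pow]; ring
  · have hk : Even k := by rcases h with ⟨c, hc⟩; rcases hm with ⟨d, hd⟩; exact ⟨c - d, by omega⟩
    rw [hm.neg_one_pow, hk.neg_one_pow]; ring

lemma pair_smul_cancel {R M : Type*} [CommRing R] [AddCommGroup M] [Module R M]
    {e₁ e₂ : ℕ} (h : Odd (e₁ + e₂)) (L : M) :
    ((-1 : R) ^ e₁) • L + ((-1 : R) ^ e₂) • L = 0 := by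
  rw [← add_smul, neg_one_pow_add_eq_zero' h, zero_smul]

/-- the involution on the index set -/
def invol (n : ℕ) (p : Fin (n+1) × Fin (n+2)) : Fin (n+1) × Fin (n+2) :=
  if h : (p.1 : ℕ) < (p.2 : ℕ) then
    (⟨(p.2 : ℕ) - 1, by have := p.2.isLt; omega⟩, ⟨(p.1 : ℕ), by have := p.1.isLt; omega⟩)
  else
    (⟨(p.2 : ℕ), by have := p.1.isLt; omega⟩, ⟨(p.1 : ℕ) + 1, by have := p.1.isLt; omega⟩)

lemma invol_of_lt (n : ℕ) (p : Fin (n+1) × Fin (n+2)) (h : (p.1 : ℕ) < (p.2 : ℕ)) :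
    invol n p = (⟨(p.2 : ℕ) - 1, by have := p.2.isLt; omega⟩,
      ⟨(p.1 : ℕ), by have := p.1.isLt; omega⟩) := dif_pos h

lemma invol_of_ge (n : ℕ) (p : Fin (n+1) × Fin (n+2)) (h : ¬ (p.1 : ℕ) < (p.2 : ℕ)) :
    invol n p = (⟨(p.2 : ℕ), by have := p.1.isLt; omega⟩,
      ⟨(p.1 : ℕ) + 1, by have := p.1.isLt; omega⟩) := dif_neg h

lemma invol_invol (n : ℕ) (p : Fin (n+1) × Fin (n+2)) : invol n (invol n p) = p := by
  have h1 := p.1.isLt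
  have h2 := p.2.isLt
  by_cases h : (p.1 : ℕ) < (p.2 : ℕ)
  · rw [invol_of_lt n p h, invol_of_ge n _ (by dsimp only; omega)]
    ext <;> simp <;> omega
  · rw [invol_of_ge n p h, invol_of_lt n _ (by dsimp only; omega)]
    ext <;> simp <;> omega

lemma invol_ne (n : ℕ) (p : Fin (n+1) × Fin (n+2)) : invol n p ≠ p := by
  have h1 := p.1.isLt
  intro hq
  by_cases h : (p.1 : ℕ) < (p.2 : ℕ)
  · rw [invol_of_lt n p h] at hq
    rw [Prod.ext_iff] at hq
    have e1 := congrArg Fin.val hq.1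
    have e2 := congrArg Fin.val hq.2
    simp at e1 e2
    omega
  · rw [invol_of_ge n p h] at hq
    rw [Prod.ext_iff] at hq
    have e2 := congrArg Fin.val hq.2
    simp at e2
    omega

lemma oneTermDiff_comp_self {X : Type*} (R : Type*) [CommRing R] (o : X → X → X)
    (hd : ∀ x y z, o (o x y) z = o (o x z) (o y z)) (n : ℕ) :
    (oneTermDiff R o n).comp (oneTermDiff R o (n+1)) = 0 := by
  rw [oneTermDiff_comp]
  apply Finset.sum_ninvolution (invol n)
  · intro p
    have h1 := p.1.isLt
    have h2 := p.2.isLt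
    by_cases h : (p.1 : ℕ) < (p.2 : ℕ)
    · rw [invol_of_lt n p h]
      dsimp only
      rw [face_face' o o hd p.1 p.2 ⟨(p.2:ℕ)-1, by omega⟩ ⟨(p.1:ℕ), by omega⟩ h rfl rfl,
        ← add_smul, neg_one_pow_add_eq_zero', zero_smul]
      rw [Nat.odd_iff]; omega
    · rw [invol_of_ge n p h]
      dsimp only
      rw [face_face' o o hd ⟨(p.2 : ℕ), by omega⟩ ⟨(p.1 : ℕ) + 1, by omega⟩ p.1 p.2
          (by simp; omega) (by simp) (by simp),
        ← add_smul, neg_one_pow_add_eq_zero', zero_smul]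
      rw [Nat.odd_iff]; omega
  · exact fun p _ => invol_ne n p
  · exact fun p => Finset.mem_univ _
  · exact fun p => invol_invol n p

lemma four_cancel {R M : Type*} [CommRing R] [AddCommGroup M] [Module R M]
    {s t : R} (h : s + t = 0) (A B : M) :
    s • A + s • B + (t • B + t • A) = 0 := by
  rw [eq_neg_of_add_eq_zero_left h, neg_smul, neg_smul]
  abel

lemma oneTermDiff_anticomm {X : Type*} (R : Type*) [CommRing R] (o o' : X → X → X)
    (hd : ∀ x y z, o (o' x y) z = o' (o x z) (o y z))
    (hd' : ∀ x y z, o' (o x y) z = o (o' x z) (o' y z)) (n : ℕ) :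
    (oneTermDiff R o n).comp (oneTermDiff R o' (n+1))
      + (oneTermDiff R o' n).comp (oneTermDiff R o (n+1)) = 0 := by
  rw [oneTermDiff_comp, oneTermDiff_comp, ← Finset.sum_add_distrib]
  apply Finset.sum_ninvolution (invol n)
  · intro p
    have h1 := p.1.isLt
    have h2 := p.2.isLt
    by_cases h : (p.1 : ℕ) < (p.2 : ℕ)
    · rw [invol_of_lt n p h]
      dsimp only
      rw [face_face' o o' hd p.1 p.2 ⟨(p.2:ℕ)-1, by omega⟩ ⟨(p.1:ℕ), by omega⟩ h rfl rfl,
        face_face' o' o hd' p.1 p.2 ⟨(p.2:ℕ)-1, by omega⟩ ⟨(p.1:ℕ), by omega⟩ h rfl rfl]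
      refine four_cancel (M := ((Fin (n+1+1) → X) →₀ R) →ₗ[R] ((Fin n → X) →₀ R))
        (neg_one_pow_add_eq_zero' ?_) _ _
      rw [Nat.odd_iff]; omega
    · rw [invol_of_ge n p h]
      dsimp only
      rw [face_face' o o' hd ⟨(p.2 : ℕ), by omega⟩ ⟨(p.1 : ℕ) + 1, by omega⟩ p.1 p.2
          (by simp; omega) (by simp) (by simp),
        face_face' o' o hd' ⟨(p.2 : ℕ), by omega⟩ ⟨(p.1 : ℕ) + 1, by omega⟩ p.1 p.2
          (by simp; omega) (by simp) (by simp)]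
      refine four_cancel (M := ((Fin (n+1+1) → X) →₀ R) →ₗ[R] ((Fin n → X) →₀ R))
        (neg_one_pow_add_eq_zero' ?_) _ _
      rw [Nat.odd_iff]; omega
  · exact fun p _ => invol_ne n p
  · exact fun p => Finset.mem_univ _
  · exact fun p => invol_invol n p

/-- If `⊳₁` and `⊳₂` are mutually right-distributive operations on `X` (in particular each is
a shelf operation), then the induced one-term differentials anticommute,
`∂^{⊳₁}∂^{⊳₂} + ∂^{⊳₂}∂^{⊳₁} = 0`, and consequently every linear combination
`a·∂^{⊳₁} + b·∂^{⊳₂}` squares to zero. -/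
theorem oneTermDiffs_anticommute {X : Type*} (R : Type*) [CommRing R] (op₁ op₂ : X → X → X)
    (hmd : ∀ o ∈ ({op₁, op₂} : Set (X → X → X)), ∀ o' ∈ ({op₁, op₂} : Set (X → X → X)),
      ∀ x y z : X, o' (o x y) z = o (o' x z) (o' y z)) :
    (∀ n : ℕ,
      (oneTermDiff R op₁ n).comp (oneTermDiff R op₂ (n+1))
        + (oneTermDiff R op₂ n).comp (oneTermDiff R op₁ (n+1)) = 0)
    ∧ ∀ (a b : R) (n : ℕ),
        (a • oneTermDiff R op₁ n + b • oneTermDiff R op₂ n).comp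
          (a • oneTermDiff R op₁ (n+1) + b • oneTermDiff R op₂ (n+1)) = 0 := by
  have m1 : op₁ ∈ ({op₁, op₂} : Set (X → X → X)) := Or.inl rfl
  have m2 : op₂ ∈ ({op₁, op₂} : Set (X → X → X)) := Or.inr rfl
  have H12 : ∀ n : ℕ,
      (oneTermDiff R op₁ n).comp (oneTermDiff R op₂ (n+1))
        + (oneTermDiff R op₂ n).comp (oneTermDiff R op₁ (n+1)) = 0 :=
    fun n => oneTermDiff_anticomm R op₁ op₂ (hmd op₂ m2 op₁ m1) (hmd op₁ m1 op₂ m2) n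
  have H1 : ∀ n : ℕ, (oneTermDiff R op₁ n).comp (oneTermDiff R op₁ (n+1)) = 0 :=
    fun n => oneTermDiff_comp_self R op₁ (hmd op₁ m1 op₁ m1) n
  have H2 : ∀ n : ℕ, (oneTermDiff R op₂ n).comp (oneTermDiff R op₂ (n+1)) = 0 :=
    fun n => oneTermDiff_comp_self R op₂ (hmd op₂ m2 op₂ m2) n
  refine ⟨H12, fun a b n => ?_⟩
  simp only [LinearMap.add_comp, LinearMap.comp_add, LinearMap.smul_comp, LinearMap.comp_smul,
    H1 n, H2 n, smul_zero, add_zero, zero_add, smul_smul, mul_comm b a]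
  rw [← smul_add, add_comm ((oneTermDiff R op₂ n).comp (oneTermDiff R op₁ (n+1))), H12 n, smul_zero]
end

section
/- Let a multispindle X act on M with weights summing so that the compound action of X on M vanishes (Σ_k a_k (m⊳_k x) = 0 for all m, x). Then the late degenerate submodule CL(M;X) (spanned by m⊗(x_n,…,x_0) with x_i = x_{i-1} for some i < n) is a subcomplex of CD(M;X), and the map s(m⊗(x_n,…,x_0)) = (-1)^n m⊗(x_n,x_n,x_{n-1},…,x_0) defines an isomorphism of chain complexes CN(M;X)[1] ≅ CD(M;X)/CL(M;X). -/
noncomputable def moduleFace {X : Type} (R : Type) [CommRing R] {M : Type}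
    [AddCommGroup M] [Module R M] (op : X → X → X) (β : X → M →ₗ[R] M)
    {n : ℕ} (i : Fin (n+1)) :
    ((Fin (n+1) → X) →₀ M) →ₗ[R] ((Fin n → X) →₀ M) :=
  Finsupp.lsum R fun f => (Finsupp.lsingle (face op i f)).comp (β (f i))

noncomputable def moduleDiff {X : Type} (R : Type) [CommRing R] {M : Type}
    [AddCommGroup M] [Module R M] {r : ℕ} (ops : Fin r → X → X → X)
    (act : Fin r → X → M →ₗ[R] M) (a : Fin r → R) (m : ℕ) :
    ((Fin (m+1) → X) →₀ M) →ₗ[R] ((Fin m → X) →₀ M) :=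
  ∑ k, a k • ∑ i : Fin (m+1),
    ((-1 : R) ^ (m - (i : ℕ))) • moduleFace R (ops k) (act k) i

/-- The degenerate submodule `CD_n(M;X)`. -/
noncomputable def degenSub (X R : Type) [CommRing R] (M : Type) [AddCommGroup M] [Module R M]
    (n : ℕ) : Submodule R ((Fin (n+1) → X) →₀ M) :=
  Submodule.span R {g | ∃ (f : Fin (n+1) → X) (m : M),
    g = Finsupp.single f m ∧ ∃ i : Fin n, f i.castSucc = f i.succ}

/-- The late degenerate submodule `CL_n(M;X)`, spanned by `m ⊗ (x_n,…,x_0)` with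
`x_i = x_{i-1}` for some `i < n`, i.e. with a repetition not involving the leftmost entry. -/
noncomputable def lateDegenSub (X R : Type) [CommRing R] (M : Type) [AddCommGroup M] [Module R M]
    (n : ℕ) : Submodule R ((Fin (n+1) → X) →₀ M) :=
  Submodule.span R {g | ∃ (f : Fin (n+1) → X) (m : M),
    g = Finsupp.single f m ∧ ∃ i : Fin n, (i : ℕ) + 1 < n ∧ f i.castSucc = f i.succ}

/-- The doubling map `s(m ⊗ (x_n,…,x_0)) = (-1)^n m ⊗ (x_n,x_n,x_{n-1},…,x_0)`. -/
noncomputable def doubling (X R : Type) [CommRing R] (M : Type) [AddCommGroup M] [Module R M]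
    (n : ℕ) : ((Fin (n+1) → X) →₀ M) →ₗ[R] ((Fin (n+2) → X) →₀ M) :=
  Finsupp.lsum R fun f =>
    ((-1 : R) ^ n) • (Finsupp.lsingle (Fin.snoc f (f (Fin.last n))) : M →ₗ[R] _)
open Finsupp

variable {X : Type} {R : Type} [CommRing R] {M : Type} [AddCommGroup M] [Module R M]

lemma moduleFace_single (op : X → X → X) (β : X → M →ₗ[R] M) {n : ℕ} (i : Fin (n+1))
    (f : Fin (n+1) → X) (m : M) :
    moduleFace R op β i (Finsupp.single f m)
      = Finsupp.single (face op i f) (β (f i) m) := by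
  simp [moduleFace]

lemma moduleDiff_single {r : ℕ} (ops : Fin r → X → X → X)
    (act : Fin r → X → M →ₗ[R] M) (a : Fin r → R) (q : ℕ) (f : Fin (q+1) → X) (v : M) :
    moduleDiff R ops act a q (Finsupp.single f v)
      = ∑ k, a k • ∑ i : Fin (q+1),
          ((-1 : R) ^ (q - (i : ℕ))) • Finsupp.single (face (ops k) i f) (act k (f i) v) := by
  simp [moduleDiff, moduleFace_single]

lemma doubling_single (n : ℕ) (f : Fin (n+1) → X) (m : M) :
    doubling X R M n (Finsupp.single f m)
      = ((-1 : R) ^ n) • Finsupp.single (Fin.snoc f (f (Fin.last n))) m := by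
  simp [doubling]

lemma span_singles {α : Type} (T : Set α) :
    Submodule.span R {g : α →₀ M | ∃ f m, g = Finsupp.single f m ∧ f ∈ T}
      = Finsupp.supported M R T := by
  apply le_antisymm
  · rw [Submodule.span_le]
    rintro g ⟨f, m, rfl, hf⟩
    rw [SetLike.mem_coe, Finsupp.mem_supported]
    intro x hx
    have hx' : x = f := by
      simpa using Finsupp.support_single_subset hx
    subst hx'; exact hf
  · intro g hg
    rw [Finsupp.mem_supported] at hg
    rw [show g = ∑ f ∈ g.support, Finsupp.single f (g f) from (Finsupp.sum_single g).symm]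
    exact Submodule.sum_mem _ fun f hf => Submodule.subset_span ⟨f, g f, rfl, hg hf⟩

lemma degenSub_eq (n : ℕ) :
    degenSub X R M n = Finsupp.supported M R {f | ∃ i : Fin n, f i.castSucc = f i.succ} :=
  span_singles _

lemma lateDegenSub_eq (n : ℕ) :
    lateDegenSub X R M n
      = Finsupp.supported M R {f | ∃ i : Fin n, (i : ℕ) + 1 < n ∧ f i.castSucc = f i.succ} :=
  span_singles _

lemma single_mem_late {n : ℕ} (f : Fin (n+1) → X) (m : M) (i : Fin n)
    (h1 : (i : ℕ) + 1 < n) (h2 : f i.castSucc = f i.succ) :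
    Finsupp.single f m ∈ lateDegenSub X R M n :=
  Submodule.subset_span ⟨f, m, rfl, i, h1, h2⟩

lemma single_mem_degen {n : ℕ} (f : Fin (n+1) → X) (m : M) (i : Fin n)
    (h2 : f i.castSucc = f i.succ) :
    Finsupp.single f m ∈ degenSub X R M n :=
  Submodule.subset_span ⟨f, m, rfl, i, h2⟩

lemma fin_app {q : ℕ} (f : Fin q → X) {k l : Fin q} (h : (k : ℕ) = (l : ℕ)) :
    f k = f l := congrArg f (Fin.ext h)

lemma face_apply_lt (op : X → X → X) {q : ℕ} (j : Fin (q+1)) (f : Fin (q+1) → X)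
    (k : Fin q) (h : (k : ℕ) < (j : ℕ)) : face op j f k = f k.castSucc := if_pos h

lemma face_apply_ge (op : X → X → X) {q : ℕ} (j : Fin (q+1)) (f : Fin (q+1) → X)
    (k : Fin q) (h : ¬ (k : ℕ) < (j : ℕ)) : face op j f k = op (f k.succ) (f j) := if_neg h

lemma face_last (op : X → X → X) {q : ℕ} (f : Fin (q+1) → X) :
    face op (Fin.last q) f = fun k => f k.castSucc := by
  funext k
  exact face_apply_lt op _ f k (by simp [k.is_lt])

lemma face_cancel (op : X → X → X) (hidem : ∀ x, op x x = x) {q : ℕ}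
    (f : Fin (q+1) → X) (i : Fin q) (hf : f i.castSucc = f i.succ) :
    face op i.castSucc f = face op i.succ f := by
  funext k
  rcases lt_trichotomy (k : ℕ) (i : ℕ) with h | h | h
  · rw [face_apply_lt op _ f k (by simpa using h), face_apply_lt op _ f k (by simp; omega)]
  · rw [face_apply_ge op _ f k (by simp; omega), face_apply_lt op _ f k (by simp; omega)]
    rw [fin_app f (show (k.succ : ℕ) = (i.succ : ℕ) by simp [h]), ← hf, hidem]
    exact (fin_app f (by simp [h])).symm
  · rw [face_apply_ge op _ f k (by simp; omega), face_apply_ge op _ f k (by simp; omega), hf]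

lemma face_late (op : X → X → X) {n : ℕ} (f : Fin (n+2) → X) (i : Fin (n+1))
    (hi : (i : ℕ) + 1 < n + 1) (hf : f i.castSucc = f i.succ) (j : Fin (n+2))
    (hj1 : (j : ℕ) ≠ (i : ℕ)) (hj2 : (j : ℕ) ≠ (i : ℕ) + 1) (hj3 : (j : ℕ) ≠ n + 1) :
    ∃ i' : Fin n, (i' : ℕ) + 1 < n ∧
      (face op j f) i'.castSucc = (face op j f) i'.succ := by
  have hjle : (j : ℕ) ≤ n + 1 := Nat.lt_succ_iff.mp j.is_lt
  rcases lt_or_gt_of_ne hj1 with h | h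
  · -- j < i
    have hi1 : 1 ≤ (i : ℕ) := by omega
    set i' : Fin n := ⟨(i : ℕ) - 1, by omega⟩ with hi'
    have hv : (i' : ℕ) = (i : ℕ) - 1 := rfl
    refine ⟨i', by omega, ?_⟩
    rw [face_apply_ge op j f _ (by simp only [Fin.coe_castSucc, hv]; omega),
        face_apply_ge op j f _ (by simp only [Fin.val_succ, hv]; omega)]
    rw [fin_app f (show ((i'.castSucc).succ : ℕ) = (i.castSucc : ℕ) by
          simp only [Fin.val_succ, Fin.coe_castSucc, hv]; omega),
        fin_app f (show ((i'.succ).succ : ℕ) = (i.succ : ℕ) by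
          simp only [Fin.val_succ, hv]; omega), hf]
  · -- j > i + 1
    rcases lt_or_gt_of_ne hj2 with h' | h'
    · omega
    set i' : Fin n := ⟨(i : ℕ), by omega⟩ with hi'
    have hv : (i' : ℕ) = (i : ℕ) := rfl
    refine ⟨i', by omega, ?_⟩
    rw [face_apply_lt op j f _ (by simp only [Fin.coe_castSucc, hv]; omega),
        face_apply_lt op j f _ (by simp only [Fin.val_succ, hv]; omega)]
    rw [fin_app f (show ((i'.castSucc).castSucc : ℕ) = (i.castSucc : ℕ) by
          simp only [Fin.coe_castSucc, hv]),
        fin_app f (show ((i'.succ).castSucc : ℕ) = (i.succ : ℕ) by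
          simp only [Fin.coe_castSucc, Fin.val_succ, hv]), hf]

lemma snoc_last_castSucc {n : ℕ} (f : Fin (n+1) → X) :
    (Fin.snoc f (f (Fin.last n)) : Fin (n+2) → X) (Fin.last n).castSucc
      = (Fin.snoc f (f (Fin.last n)) : Fin (n+2) → X) (Fin.last n).succ := by
  rw [Fin.succ_last, Fin.snoc_last, Fin.snoc_castSucc]

lemma doubling_mem_degen (n : ℕ) (g : (Fin (n+1) → X) →₀ M) :
    doubling X R M n g ∈ degenSub X R M (n+1) := by
  induction g using Finsupp.induction_linear with
  | zero => rw [map_zero]; exact zero_mem _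
  | add f g hf hg => rw [map_add]; exact add_mem hf hg
  | single f m =>
      rw [doubling_single]
      exact Submodule.smul_mem _ _
        (single_mem_degen _ m (Fin.last n) (snoc_last_castSucc f))

lemma snoc_inj {n : ℕ} {f' f : Fin (n+1) → X}
    (h : (Fin.snoc f' (f' (Fin.last n)) : Fin (n+2) → X)
        = Fin.snoc f (f (Fin.last n))) : f' = f := by
  funext k
  have := congrFun h k.castSucc
  simpa [Fin.snoc_castSucc] using this

lemma doubling_apply (n : ℕ) (g : (Fin (n+1) → X) →₀ M) (f : Fin (n+1) → X) :
    (doubling X R M n g) (Fin.snoc f (f (Fin.last n)))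
      = ((-1 : R) ^ n) • g f := by
  induction g using Finsupp.induction_linear with
  | zero => simp
  | add p q hp hq => rw [map_add, Finsupp.add_apply, hp, hq, Finsupp.add_apply, smul_add]
  | single f' m =>
      rw [doubling_single, Finsupp.smul_apply]
      rcases eq_or_ne f' f with rfl | hne
      · simp [Finsupp.single_apply]
      · have hne2 : (Fin.snoc f' (f' (Fin.last n)) : Fin (n+2) → X)
            ≠ Fin.snoc f (f (Fin.last n)) := fun h => hne (snoc_inj h)
        simp [Finsupp.single_apply, hne, hne2]

lemma doubling_inj_degen (n : ℕ) (g : (Fin (n+1) → X) →₀ M)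
    (hg : doubling X R M n g ∈ lateDegenSub X R M (n+1)) :
    g ∈ degenSub X R M n := by
  rw [lateDegenSub_eq, Finsupp.mem_supported] at hg
  rw [degenSub_eq, Finsupp.mem_supported]
  intro f hf
  have hf0 : g f ≠ 0 := Finsupp.mem_support_iff.mp hf
  have h2 : (doubling X R M n g) (Fin.snoc f (f (Fin.last n))) ≠ 0 := by
    rw [doubling_apply]
    intro h0
    apply hf0
    have := congrArg (fun z => ((-1 : R) ^ n) • z) h0
    simpa [smul_smul, ← mul_pow] using this
  obtain ⟨i, hi, heq⟩ := hg (Finsupp.mem_support_iff.mpr h2)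
  rw [show i.succ = Fin.castSucc ⟨(i : ℕ) + 1, hi⟩ from Fin.ext (by simp)] at heq
  rw [show i.castSucc = Fin.castSucc i from rfl] at heq
  rw [Fin.snoc_castSucc, Fin.snoc_castSucc] at heq
  refine ⟨⟨(i : ℕ), by omega⟩, ?_⟩
  calc f (Fin.castSucc ⟨(i : ℕ), by omega⟩) = f i := fin_app f (by simp)
    _ = f ⟨(i : ℕ) + 1, hi⟩ := heq
    _ = f (Fin.succ ⟨(i : ℕ), by omega⟩) := fin_app f (by simp)

lemma surj_mod_late (n : ℕ) (c : (Fin (n+2) → X) →₀ M) (hc : c ∈ degenSub X R M (n+1)) :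
    ∃ g : (Fin (n+1) → X) →₀ M, c - doubling X R M n g ∈ lateDegenSub X R M (n+1) := by
  induction hc using Submodule.span_induction with
  | mem x hx =>
      obtain ⟨f, v, rfl, i, hfi⟩ := hx
      by_cases hi : (i : ℕ) + 1 < n + 1
      · exact ⟨0, by rw [map_zero, sub_zero]; exact single_mem_late f v i hi hfi⟩
      · have hin : (i : ℕ) = n := by omega
        refine ⟨Finsupp.single (fun k => f k.castSucc) (((-1 : R) ^ n) • v), ?_⟩
        rw [doubling_single, Finsupp.smul_single, smul_smul, ← mul_pow]
        have hsn : (Fin.snoc (fun k : Fin (n+1) => f k.castSucc)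
            ((fun k : Fin (n+1) => f k.castSucc) (Fin.last n)) : Fin (n+2) → X) = f := by
          funext k
          refine Fin.lastCases ?_ (fun k' => ?_) k
          · rw [Fin.snoc_last]
            show f (Fin.last n).castSucc = f (Fin.last (n+1))
            calc f (Fin.last n).castSucc = f i.castSucc := fin_app f (by simp [hin])
              _ = f i.succ := hfi
              _ = f (Fin.last (n+1)) := fin_app f (by simp [hin])
          · rw [Fin.snoc_castSucc]
        rw [hsn]
        simp only [neg_mul_neg, one_mul, one_pow, one_smul, sub_self]
        exact zero_mem _
  | zero => exact ⟨0, by rw [map_zero, sub_zero]; exact zero_mem _⟩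
  | add x y _ _ hx hy =>
      obtain ⟨g1, h1⟩ := hx; obtain ⟨g2, h2⟩ := hy
      exact ⟨g1 + g2, by rw [map_add]; simpa [add_sub_add_comm] using add_mem h1 h2⟩
  | smul a x _ hx =>
      obtain ⟨g1, h1⟩ := hx
      exact ⟨a • g1, by rw [map_smul, ← smul_sub]; exact Submodule.smul_mem _ _ h1⟩

lemma face_snoc (op : X → X → X) {n : ℕ} (j' : Fin (n+1)) (f : Fin (n+2) → X) :
    face op (j'.castSucc.castSucc) (Fin.snoc f (f (Fin.last (n+1))))
      = Fin.snoc (face op j'.castSucc f) (face op j'.castSucc f (Fin.last n)) := by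
  have hj : (j' : ℕ) ≤ n := Nat.lt_succ_iff.mp j'.is_lt
  funext k
  refine Fin.lastCases ?_ (fun k' => ?_) k
  · rw [Fin.snoc_last, face_apply_ge op _ _ _ (by simp),
        face_apply_ge op _ f _ (by simp; omega)]
    rw [fin_app (Fin.snoc f (f (Fin.last (n+1))))
        (show ((Fin.last (n+1)).succ : ℕ) = ((Fin.last (n+2)) : ℕ) by simp),
        Fin.snoc_last, Fin.snoc_castSucc]
    rw [fin_app f (show ((Fin.last n).succ : ℕ) = ((Fin.last (n+1)) : ℕ) by simp)]
  · rw [Fin.snoc_castSucc]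
    by_cases h : (k' : ℕ) < (j' : ℕ)
    · rw [face_apply_lt op _ _ _ (by simpa using h), face_apply_lt op _ f _ (by simpa using h)]
      rw [Fin.snoc_castSucc]
    · rw [face_apply_ge op _ _ _ (by simpa using h), face_apply_ge op _ f _ (by simpa using h)]
      rw [Fin.snoc_castSucc, Fin.succ_castSucc, Fin.snoc_castSucc]

lemma face_mid_snoc (op : X → X → X) (hidem : ∀ x, op x x = x) {n : ℕ}
    (f : Fin (n+2) → X) :
    face op ((Fin.last (n+1)).castSucc) (Fin.snoc f (f (Fin.last (n+1)))) = f := by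
  funext k'
  by_cases h : (k' : ℕ) < n + 1
  · rw [face_apply_lt op _ _ _ (by simpa using h)]
    rw [Fin.snoc_castSucc]
  · have hk : k' = Fin.last (n+1) := Fin.ext (by have := k'.is_lt; simp; omega)
    subst hk
    rw [face_apply_ge op _ _ _ (by simp)]
    rw [fin_app (Fin.snoc f (f (Fin.last (n+1))))
        (show ((Fin.last (n+1)).succ : ℕ) = ((Fin.last (n+2)) : ℕ) by simp),
        Fin.snoc_last]
    rw [Fin.snoc_castSucc, hidem]

lemma sum_smul_single_eq_zero {r : ℕ} {α : Type} (a : Fin r → R) (G : α)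
    (w : Fin r → M) (h : ∑ k, a k • w k = 0) :
    ∑ k, a k • Finsupp.single G (w k) = (0 : α →₀ M) := by
  have : ∑ k, a k • Finsupp.single G (w k) = Finsupp.single G (∑ k, a k • w k) := by
    rw [Finsupp.single_finset_sum]
    exact Finset.sum_congr rfl fun k _ => (Finsupp.smul_single _ _ _)
  rw [this, h, Finsupp.single_zero]

lemma sum_smul_single_eq_zero' {r : ℕ} {α : Type} (a : Fin r → R) (c : R) (G : α)
    (w : Fin r → M) (h : ∑ k, a k • w k = 0) :
    ∑ k, c • a k • Finsupp.single G (w k) = (0 : α →₀ M) := by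
  rw [← Finset.smul_sum, sum_smul_single_eq_zero a G w h, smul_zero]

lemma doubling_comm {r : ℕ} (ops : Fin r → X → X → X)
    (hidem : ∀ (k : Fin r) (x : X), ops k x x = x)
    (act : Fin r → X → M →ₗ[R] M) (a : Fin r → R)
    (hvanish : ∀ (m : M) (x : X), ∑ k, a k • act k x m = 0)
    (n : ℕ) (g : (Fin (n+2) → X) →₀ M) :
    doubling X R M n (moduleDiff R ops act a (n+1) g)
      = moduleDiff R ops act a (n+2) (doubling X R M (n+1) g) := by
  induction g using Finsupp.induction_linear with
  | zero => simp
  | add p q hp hq => simp only [map_add, hp, hq]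
  | single f m =>
    have hL : doubling X R M n (moduleDiff R ops act a (n+1) (Finsupp.single f m))
        = ∑ j' : Fin (n+1), ∑ k,
            (a k * (-1:R) ^ (n + 1 - (j':ℕ)) * (-1:R) ^ n) •
              Finsupp.single
                (Fin.snoc (face (ops k) j'.castSucc f) (face (ops k) j'.castSucc f (Fin.last n)))
                (act k (f j'.castSucc) m) := by
      rw [moduleDiff_single, map_sum]
      have e1 : ∀ k : Fin r,
          doubling X R M n (a k • ∑ j : Fin (n+2), ((-1:R) ^ (n + 1 - (j:ℕ))) •
              Finsupp.single (face (ops k) j f) (act k (f j) m))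
            = ∑ j : Fin (n+2), (a k * (-1:R) ^ (n + 1 - (j:ℕ)) * (-1:R) ^ n) •
                Finsupp.single
                  (Fin.snoc (face (ops k) j f) (face (ops k) j f (Fin.last n)))
                  (act k (f j) m) := by
        intro k
        rw [map_smul, map_sum, Finset.smul_sum]
        refine Finset.sum_congr rfl fun j _ => ?_
        rw [map_smul, doubling_single, smul_smul, smul_smul]
      rw [Finset.sum_congr rfl (fun k _ => e1 k), Finset.sum_comm, Fin.sum_univ_castSucc]
      have elast : ∑ k,
          (a k * (-1:R) ^ (n + 1 - ((Fin.last (n+1)):ℕ)) * (-1:R) ^ n) •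
            Finsupp.single
              ((Fin.snoc (face (ops k) (Fin.last (n+1)) f)
                (face (ops k) (Fin.last (n+1)) f (Fin.last n))) : Fin (n+2) → X)
              (act k (f (Fin.last (n+1))) m) = (0 : (Fin (n+2) → X) →₀ M) := by
        have e2 : ∀ k : Fin r,
            (a k * (-1:R) ^ (n + 1 - ((Fin.last (n+1)):ℕ)) * (-1:R) ^ n) •
              Finsupp.single
                ((Fin.snoc (face (ops k) (Fin.last (n+1)) f)
                  (face (ops k) (Fin.last (n+1)) f (Fin.last n))) : Fin (n+2) → X)
                (act k (f (Fin.last (n+1))) m)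
            = ((-1:R) ^ n) • a k •
              Finsupp.single
                (Fin.snoc (fun k' : Fin (n+1) => f k'.castSucc)
                  ((fun k' : Fin (n+1) => f k'.castSucc) (Fin.last n)))
                (act k (f (Fin.last (n+1))) m) := by
          intro k
          rw [face_last (ops k) f, smul_smul]
          congr 1
          simp [mul_comm]
        rw [Finset.sum_congr rfl (fun k _ => e2 k)]
        exact sum_smul_single_eq_zero' a _ _ _ (hvanish m _)
      rw [elast, add_zero]
      exact Finset.sum_congr rfl fun j' _ => Finset.sum_congr rfl fun k _ => by
        rw [Fin.coe_castSucc]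
    have hR : moduleDiff R ops act a (n+2) (doubling X R M (n+1) (Finsupp.single f m))
        = ∑ j' : Fin (n+1), ∑ k,
            (a k * (-1:R) ^ (n + 1 - (j':ℕ)) * (-1:R) ^ n) •
              Finsupp.single
                (Fin.snoc (face (ops k) j'.castSucc f) (face (ops k) j'.castSucc f (Fin.last n)))
                (act k (f j'.castSucc) m) := by
      rw [doubling_single, map_smul, moduleDiff_single]
      have e1 : ∀ k : Fin r,
          a k • ∑ J : Fin (n+3), ((-1:R) ^ (n + 2 - (J:ℕ))) •
              Finsupp.single (face (ops k) J (Fin.snoc f (f (Fin.last (n+1)))))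
                (act k ((Fin.snoc f (f (Fin.last (n+1))) : Fin (n+3) → X) J) m)
            = ∑ J : Fin (n+3), (a k * (-1:R) ^ (n + 2 - (J:ℕ))) •
                Finsupp.single (face (ops k) J (Fin.snoc f (f (Fin.last (n+1)))))
                  (act k ((Fin.snoc f (f (Fin.last (n+1))) : Fin (n+3) → X) J) m) := by
        intro k
        rw [Finset.smul_sum]
        exact Finset.sum_congr rfl fun J _ => smul_smul _ _ _
      rw [Finset.sum_congr rfl (fun k _ => e1 k), Finset.sum_comm, Fin.sum_univ_castSucc]
      have hz2 : ∑ k,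
          (a k * (-1:R) ^ (n + 2 - ((Fin.last (n+2)):ℕ))) •
            Finsupp.single (face (ops k) (Fin.last (n+2)) (Fin.snoc f (f (Fin.last (n+1)))))
              (act k ((Fin.snoc f (f (Fin.last (n+1))) : Fin (n+3) → X) (Fin.last (n+2))) m)
            = (0 : (Fin (n+2) → X) →₀ M) := by
        have e2 : ∀ k : Fin r,
            (a k * (-1:R) ^ (n + 2 - ((Fin.last (n+2)):ℕ))) •
              Finsupp.single (face (ops k) (Fin.last (n+2)) (Fin.snoc f (f (Fin.last (n+1)))))
                (act k ((Fin.snoc f (f (Fin.last (n+1))) : Fin (n+3) → X) (Fin.last (n+2))) m)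
            = (1:R) • a k • Finsupp.single
                (fun k' : Fin (n+2) => (Fin.snoc f (f (Fin.last (n+1))) : Fin (n+3) → X) k'.castSucc)
                (act k (f (Fin.last (n+1))) m) := by
          intro k
          rw [face_last (ops k) (Fin.snoc f (f (Fin.last (n+1)))), Fin.snoc_last, smul_smul]
          congr 1
          simp [mul_comm]
        rw [Finset.sum_congr rfl (fun k _ => e2 k)]
        exact sum_smul_single_eq_zero' a _ _ _ (hvanish m _)
      rw [hz2, add_zero, Fin.sum_univ_castSucc]
      have hz1 : ∑ k,
          (a k * (-1:R) ^ (n + 2 - (((Fin.last (n+1)).castSucc : Fin (n+3)):ℕ))) •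
            Finsupp.single
              (face (ops k) ((Fin.last (n+1)).castSucc) (Fin.snoc f (f (Fin.last (n+1)))))
              (act k ((Fin.snoc f (f (Fin.last (n+1))) : Fin (n+3) → X)
                ((Fin.last (n+1)).castSucc)) m)
            = (0 : (Fin (n+2) → X) →₀ M) := by
        have e2 : ∀ k : Fin r,
            (a k * (-1:R) ^ (n + 2 - (((Fin.last (n+1)).castSucc : Fin (n+3)):ℕ))) •
              Finsupp.single
                (face (ops k) ((Fin.last (n+1)).castSucc) (Fin.snoc f (f (Fin.last (n+1)))))
                (act k ((Fin.snoc f (f (Fin.last (n+1))) : Fin (n+3) → X)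
                  ((Fin.last (n+1)).castSucc)) m)
            = ((-1:R)) • a k • Finsupp.single f (act k (f (Fin.last (n+1))) m) := by
          intro k
          rw [face_mid_snoc (ops k) (hidem k) f, Fin.snoc_castSucc, smul_smul]
          congr 1
          have : n + 2 - (((Fin.last (n+1)).castSucc : Fin (n+3)):ℕ) = 1 := by simp
          rw [this, pow_one, mul_comm]
        rw [Finset.sum_congr rfl (fun k _ => e2 k)]
        exact sum_smul_single_eq_zero' a _ _ _ (hvanish m _)
      rw [hz1, add_zero, Finset.smul_sum]
      refine Finset.sum_congr rfl fun j' _ => ?_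
      rw [Finset.smul_sum]
      refine Finset.sum_congr rfl fun k _ => ?_
      rw [face_snoc (ops k) j' f, Fin.snoc_castSucc, smul_smul]
      congr 1
      have hjn : (j' : ℕ) ≤ n := Nat.lt_succ_iff.mp j'.is_lt
      have h2 : n + 2 - ((j'.castSucc.castSucc : Fin (n+3)) : ℕ) = (n + 1 - (j' : ℕ)) + 1 := by
        simp; omega
      rw [h2, pow_succ, pow_succ]
      ring
    rw [hL, hR]

lemma diff_single_mem_late {r : ℕ} (ops : Fin r → X → X → X)
    (hidem : ∀ (k : Fin r) (x : X), ops k x x = x)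
    (act : Fin r → X → M →ₗ[R] M) (a : Fin r → R)
    (hvanish : ∀ (m : M) (x : X), ∑ k, a k • act k x m = 0)
    (n : ℕ) (f : Fin (n+2) → X) (v : M) (i : Fin (n+1))
    (hi : (i : ℕ) + 1 < n + 1) (hf : f i.castSucc = f i.succ) :
    moduleDiff R ops act a (n+1) (Finsupp.single f v) ∈ lateDegenSub X R M n := by
  rw [moduleDiff_single]
  let T : Fin r → Fin (n+2) → ((Fin (n+1) → X) →₀ M) := fun k j =>
    ((-1:R) ^ (n + 1 - (j:ℕ))) • Finsupp.single (face (ops k) j f) (act k (f j) v)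
  change ∑ k, a k • ∑ j, T k j ∈ _
  have hmem2 : i.succ ∈ Finset.univ.erase i.castSucc :=
    Finset.mem_erase.mpr ⟨Fin.ne_of_val_ne (by simp), Finset.mem_univ _⟩
  have hmem3 : Fin.last (n+1) ∈ (Finset.univ.erase i.castSucc).erase i.succ :=
    Finset.mem_erase.mpr ⟨Fin.ne_of_val_ne (by simp; omega),
      Finset.mem_erase.mpr ⟨Fin.ne_of_val_ne (by simp; omega), Finset.mem_univ _⟩⟩
  have hsplit : ∀ k, ∑ j, T k j
      = (T k i.castSucc + T k i.succ) + (T k (Fin.last (n+1))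
        + ∑ j ∈ ((Finset.univ.erase i.castSucc).erase i.succ).erase (Fin.last (n+1)), T k j) := by
    intro k
    calc ∑ j, T k j = T k i.castSucc + ∑ j ∈ Finset.univ.erase i.castSucc, T k j :=
          (Finset.add_sum_erase _ _ (Finset.mem_univ _)).symm
      _ = T k i.castSucc + (T k i.succ
            + ∑ j ∈ (Finset.univ.erase i.castSucc).erase i.succ, T k j) := by
          rw [Finset.add_sum_erase _ _ hmem2]
      _ = T k i.castSucc + (T k i.succ + (T k (Fin.last (n+1))
            + ∑ j ∈ ((Finset.univ.erase i.castSucc).erase i.succ).erase (Fin.last (n+1)), T k j)) := by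
          rw [Finset.add_sum_erase _ _ hmem3]
      _ = _ := by abel
  have hstep : (∑ k, a k • ∑ j, T k j)
      = ∑ k, a k • (T k i.castSucc + T k i.succ)
        + (∑ k, a k • T k (Fin.last (n+1))
          + ∑ k, a k • ∑ j ∈ ((Finset.univ.erase i.castSucc).erase i.succ).erase (Fin.last (n+1)), T k j) := by
    rw [Finset.sum_congr rfl (fun k _ => by rw [hsplit k])]
    simp only [smul_add, Finset.sum_add_distrib]
  rw [hstep]
  have hpair : ∀ k, T k i.castSucc + T k i.succ = 0 := by
    intro k
    show ((-1:R) ^ (n + 1 - ((i.castSucc : Fin (n+2)):ℕ))) •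
        Finsupp.single (face (ops k) i.castSucc f) (act k (f i.castSucc) v)
      + ((-1:R) ^ (n + 1 - ((i.succ : Fin (n+2)):ℕ))) •
        Finsupp.single (face (ops k) i.succ f) (act k (f i.succ) v) = 0
    rw [face_cancel (ops k) (hidem k) f i hf, hf]
    have hc : ((-1:R) ^ (n + 1 - ((i.castSucc : Fin (n+2)):ℕ)))
        = -((-1:R) ^ (n + 1 - ((i.succ : Fin (n+2)):ℕ))) := by
      simp only [Fin.coe_castSucc, Fin.val_succ]
      rw [show n + 1 - (i:ℕ) = (n + 1 - ((i:ℕ)+1)) + 1 from by omega, pow_succ]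
      ring
    rw [hc, neg_smul, neg_add_cancel]
  have hA : ∑ k, a k • (T k i.castSucc + T k i.succ) = 0 := by
    rw [Finset.sum_congr rfl (fun k _ => by rw [hpair k, smul_zero])]
    exact Finset.sum_const_zero
  have htop : ∑ k, a k • T k (Fin.last (n+1)) = 0 := by
    have e : ∀ k : Fin r, a k • T k (Fin.last (n+1))
        = (1:R) • a k • Finsupp.single (fun k' : Fin (n+1) => f k'.castSucc)
            (act k (f (Fin.last (n+1))) v) := by
      intro k
      show a k • (((-1:R) ^ (n + 1 - ((Fin.last (n+1) : Fin (n+2)):ℕ))) •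
          Finsupp.single (face (ops k) (Fin.last (n+1)) f) (act k (f (Fin.last (n+1))) v)) = _
      rw [face_last (ops k) f]
      simp [smul_smul, mul_comm]
    rw [Finset.sum_congr rfl (fun k _ => e k)]
    exact sum_smul_single_eq_zero' a _ _ _ (hvanish v _)
  rw [hA, htop, zero_add, zero_add]
  refine Submodule.sum_mem _ fun k _ => Submodule.smul_mem _ _ (Submodule.sum_mem _ fun j hj => ?_)
  obtain ⟨hne3, hrem⟩ := Finset.mem_erase.mp hj
  obtain ⟨hne2, hrem2⟩ := Finset.mem_erase.mp hrem
  obtain ⟨hne1, -⟩ := Finset.mem_erase.mp hrem2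
  have hv1 : (j : ℕ) ≠ (i : ℕ) := fun h => hne1 (Fin.ext (by simpa using h))
  have hv2 : (j : ℕ) ≠ (i : ℕ) + 1 := fun h => hne2 (Fin.ext (by simpa using h))
  have hv3 : (j : ℕ) ≠ n + 1 := fun h => hne3 (Fin.ext (by simpa using h))
  obtain ⟨i', hi', heq⟩ := face_late (ops k) f i hi hf j hv1 hv2 hv3
  exact Submodule.smul_mem _ _ (single_mem_late _ _ i' hi' heq)

lemma diff_maps_late {r : ℕ} (ops : Fin r → X → X → X)
    (hidem : ∀ (k : Fin r) (x : X), ops k x x = x)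
    (act : Fin r → X → M →ₗ[R] M) (a : Fin r → R)
    (hvanish : ∀ (m : M) (x : X), ∑ k, a k • act k x m = 0)
    (n : ℕ) :
    Submodule.map (moduleDiff R ops act a (n+1)) (lateDegenSub X R M (n+1))
      ≤ lateDegenSub X R M n := by
  rintro _ ⟨g, hg, rfl⟩
  induction hg using Submodule.span_induction with
  | mem x hx =>
      obtain ⟨f, v, rfl, i, hi, hf⟩ := hx
      exact diff_single_mem_late ops hidem act a hvanish n f v i hi hf
  | zero => rw [map_zero]; exact zero_mem _
  | add x y hx hy ihx ihy => rw [map_add]; exact add_mem ihx ihy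
  | smul c x hx ih => rw [map_smul]; exact Submodule.smul_mem _ _ ih

/-- If the compound action of the multispindle `X` on `M` vanishes, then `CL(M;X)` is a
subcomplex of `CD(M;X)` and `s(m⊗(x_n,…,x_0)) = (-1)^n m⊗(x_n,x_n,…,x_0)` induces an
isomorphism of chain complexes `CN(M;X)[1] ≅ CD(M;X)/CL(M;X)`: `s` lands in `CD`, is a
chain map modulo `CL`, and the induced map `C/CD → CD/CL` is bijective. -/
theorem late_degenerate_and_doubling
    {X : Type} (R : Type) [CommRing R] (M : Type) [AddCommGroup M] [Module R M]
    {r : ℕ} (ops : Fin r → X → X → X)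
    (hidem : ∀ (k : Fin r) (x : X), ops k x x = x)
    (hdistr : ∀ (i j : Fin r) (x y z : X),
      ops j (ops i x y) z = ops i (ops j x z) (ops j y z))
    (act : Fin r → X → (M →ₗ[R] M))
    (hact : ∀ (i j : Fin r) (x y : X) (m : M),
      act j y (act i x m) = act i (ops j x y) (act j y m))
    (a : Fin r → R)
    (hvanish : ∀ (m : M) (x : X), ∑ k, a k • act k x m = 0) :
    (∀ n : ℕ, Submodule.map (moduleDiff R ops act a (n+1)) (lateDegenSub X R M (n+1))
        ≤ lateDegenSub X R M n)
    ∧ (∀ (n : ℕ) (g : (Fin (n+1) → X) →₀ M), doubling X R M n g ∈ degenSub X R M (n+1))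
    ∧ (∀ (n : ℕ) (g : (Fin (n+2) → X) →₀ M),
        doubling X R M n (moduleDiff R ops act a (n+1) g)
          - moduleDiff R ops act a (n+2) (doubling X R M (n+1) g)
          ∈ lateDegenSub X R M (n+1))
    ∧ (∀ (n : ℕ) (c : (Fin (n+2) → X) →₀ M), c ∈ degenSub X R M (n+1) →
        ∃ g : (Fin (n+1) → X) →₀ M, c - doubling X R M n g ∈ lateDegenSub X R M (n+1))
    ∧ (∀ (n : ℕ) (g : (Fin (n+1) → X) →₀ M),
        doubling X R M n g ∈ lateDegenSub X R M (n+1) → g ∈ degenSub X R M n) := by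
  exact ⟨fun n => diff_maps_late ops hidem act a hvanish n,
    fun n g => doubling_mem_degen n g,
    fun n g => by
      rw [doubling_comm ops hidem act a hvanish n g, sub_self]
      exact zero_mem _,
    fun n c hc => surj_mod_late n c hc,
    fun n g hg => doubling_inj_degen n g hg⟩
end
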